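/- Let A be an arbitrary set and let N be a subset of Add(A,1) such that: (i) N is closed under extension, i.e., if p ∈ N and the condition q extends p then q ∈ N; and (ii) whenever every extension of a condition p has a further extension lying in N, then p ∈ N. Call p ∈ N minimal if no proper restriction of p belongs to N. Then for every natural number k, the set of minimal elements of N whose domain has cardinality exactly k is finite. -/

import Mathlib

namespace DeltaAux

variable {α : Type*} [DecidableEq α]

/-- The set of members of `S` that are "blocked" by a list `L`. -/
def badSet (S : Set (Finset α)) (L : List (Finset α)) : Set (Finset α) :=
  {s ∈ S | s ∈ L ∨ ∃ t ∈ L, ¬ Disjoint s t}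

omit [DecidableEq α] in
lemma badSet_finite (S : Set (Finset α)) (hfin : ∀ a : α, {s ∈ S | a ∈ s}.Finite)
    (L : List (Finset α)) : (badSet S L).Finite := by
  have hsub : badSet S L ⊆ {s | s ∈ L} ∪ ⋃ t ∈ {t | t ∈ L}, ⋃ a ∈ (t : Finset α), {s ∈ S | a ∈ s} := by
    rintro s ⟨hsS, h | ⟨t, htL, hnd⟩⟩
    · exact Or.inl h
    · right
      rcases Finset.not_disjoint_iff.1 hnd with ⟨a, has, hat⟩
      exact Set.mem_biUnion htL (Set.mem_biUnion hat ⟨hsS, has⟩)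
  refine Set.Finite.subset ((L.finite_toSet).union ?_) hsub
  exact (L.finite_toSet).biUnion fun t _ => (t.finite_toSet).biUnion fun a _ => hfin a

lemma exists_fresh (S : Set (Finset α)) (hS : S.Infinite)
    (hfin : ∀ a : α, {s ∈ S | a ∈ s}.Finite) (L : List (Finset α)) :
    ∃ s, s ∈ S \ badSet S L :=
  (hS.diff (badSet_finite S hfin L)).nonempty

noncomputable def chain (S : Set (Finset α)) (hS : S.Infinite)
    (hfin : ∀ a : α, {s ∈ S | a ∈ s}.Finite) : ℕ → List (Finset α)
  | 0 => []
  | n + 1 => Classical.choose (exists_fresh S hS hfin (chain S hS hfin n)) :: chain S hS hfin n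

noncomputable def pick (S : Set (Finset α)) (hS : S.Infinite)
    (hfin : ∀ a : α, {s ∈ S | a ∈ s}.Finite) (n : ℕ) : Finset α :=
  Classical.choose (exists_fresh S hS hfin (chain S hS hfin n))

lemma pick_spec (S : Set (Finset α)) (hS : S.Infinite)
    (hfin : ∀ a : α, {s ∈ S | a ∈ s}.Finite) (n : ℕ) :
    pick S hS hfin n ∈ S \ badSet S (chain S hS hfin n) :=
  Classical.choose_spec (exists_fresh S hS hfin (chain S hS hfin n))

lemma pick_mem_chain (S : Set (Finset α)) (hS : S.Infinite)
    (hfin : ∀ a : α, {s ∈ S | a ∈ s}.Finite) {m n : ℕ} (h : m < n) :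
    pick S hS hfin m ∈ chain S hS hfin n := by
  induction n with
  | zero => omega
  | succ n ih =>
    rcases Nat.lt_succ_iff_lt_or_eq.1 h with h' | h'
    · exact List.mem_cons_of_mem _ (ih h')
    · subst h'; exact List.mem_cons_self

lemma pick_not_bad (S : Set (Finset α)) (hS : S.Infinite)
    (hfin : ∀ a : α, {s ∈ S | a ∈ s}.Finite) {m n : ℕ} (h : m < n) :
    pick S hS hfin n ≠ pick S hS hfin m ∧
      Disjoint (pick S hS hfin n) (pick S hS hfin m) := by
  have hspec := pick_spec S hS hfin n
  have hmem := pick_mem_chain S hS hfin h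
  rw [Set.mem_diff] at hspec
  constructor
  · intro he
    exact hspec.2 ⟨hspec.1, Or.inl (he ▸ hmem)⟩
  · by_contra hnd
    exact hspec.2 ⟨hspec.1, Or.inr ⟨_, hmem, hnd⟩⟩

/-- An infinite family of finsets, each element of `α` belonging to only finitely many
members, contains an infinite pairwise disjoint subfamily. -/
lemma exists_infinite_pairwise_disjoint (S : Set (Finset α)) (hS : S.Infinite)
    (hfin : ∀ a : α, {s ∈ S | a ∈ s}.Finite) :
    ∃ T ⊆ S, T.Infinite ∧ ∀ s ∈ T, ∀ t ∈ T, s ≠ t → s ∩ t = ∅ := by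
  refine ⟨Set.range (pick S hS hfin), ?_, ?_, ?_⟩
  · rintro _ ⟨n, rfl⟩; exact (pick_spec S hS hfin n).1
  · apply Set.infinite_range_of_injective
    intro m n he
    by_contra hne
    rcases Nat.lt_or_ge m n with h | h
    · exact (pick_not_bad S hS hfin h).1 he.symm
    · exact (pick_not_bad S hS hfin (lt_of_le_of_ne h (Ne.symm hne))).1 he
  · rintro _ ⟨m, rfl⟩ _ ⟨n, rfl⟩ hne
    rw [← Finset.disjoint_iff_inter_eq_empty]
    rcases Nat.lt_or_ge m n with h | h
    · exact ((pick_not_bad S hS hfin h).2).symm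
    · have : n < m := lt_of_le_of_ne h (fun he => hne (he ▸ rfl))
      exact (pick_not_bad S hS hfin this).2

/-- Δ-system lemma for infinite families of bounded-size finsets. -/
theorem delta_system : ∀ (k : ℕ) (S : Set (Finset α)), S.Infinite →
    (∀ s ∈ S, s.card ≤ k) →
    ∃ (R : Finset α) (T : Set (Finset α)), T ⊆ S ∧ T.Infinite ∧
      ∀ s ∈ T, ∀ t ∈ T, s ≠ t → s ∩ t = R := by
  intro k
  induction k with
  | zero =>
    intro S hS hcard
    exact absurd ((Set.finite_singleton (∅ : Finset α)).subset fun s hs =>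
      Finset.card_eq_zero.1 (Nat.le_zero.1 (hcard s hs))) hS
  | succ k ih =>
    intro S hS hcard
    by_cases h : ∃ a : α, {s ∈ S | a ∈ s}.Infinite
    · obtain ⟨a, ha⟩ := h
      set S₀ : Set (Finset α) := {s ∈ S | a ∈ s} with hS₀
      have hinj : Set.InjOn (fun s : Finset α => s.erase a) S₀ := by
        intro s hs t ht he
        simp only at he
        have : insert a (s.erase a) = insert a (t.erase a) := by rw [he]
        rwa [Finset.insert_erase hs.2, Finset.insert_erase ht.2] at this
      have hS₁ : ((fun s : Finset α => s.erase a) '' S₀).Infinite := ha.image hinj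
      have hcard₁ : ∀ s ∈ (fun s : Finset α => s.erase a) '' S₀, s.card ≤ k := by
        rintro _ ⟨s, hs, rfl⟩
        simp only [Finset.card_erase_of_mem hs.2]
        have := hcard s hs.1
        omega
      obtain ⟨R₁, T₁, hT₁sub, hT₁inf, hroot₁⟩ := ih _ hS₁ hcard₁
      refine ⟨insert a R₁, {s ∈ S₀ | s.erase a ∈ T₁}, fun s hs => hs.1.1, ?_, ?_⟩
      · intro hfinT
        apply hT₁inf
        apply (hfinT.image (fun s : Finset α => s.erase a)).subset
        intro t ht
        obtain ⟨s, hs, rfl⟩ := hT₁sub ht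
        exact ⟨s, ⟨hs, ht⟩, rfl⟩
      · rintro s ⟨hs₀, hsT⟩ t ⟨ht₀, htT⟩ hne
        have hne' : s.erase a ≠ t.erase a := fun he => hne (hinj hs₀ ht₀ he)
        have := hroot₁ _ hsT _ htT hne'
        ext x
        simp only [Finset.mem_inter, Finset.mem_insert]
        constructor
        · rintro ⟨hxs, hxt⟩
          by_cases hxa : x = a
          · exact Or.inl hxa
          · right
            rw [← this]
            simp [Finset.mem_erase, hxa, hxs, hxt]
        · rintro (rfl | hx)
          · exact ⟨hs₀.2, ht₀.2⟩
          · rw [← this] at hx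
            simp only [Finset.mem_inter, Finset.mem_erase] at hx
            exact ⟨hx.1.2, hx.2.2⟩
    · push_neg at h
      obtain ⟨T, hTS, hTinf, hdisj⟩ := exists_infinite_pairwise_disjoint S hS h
      exact ⟨∅, T, hTS, hTinf, hdisj⟩

end DeltaAux

/-- A condition in the forcing `Add(A,1)`: a partial function from `A` to `{0,1}` (represented
as `Bool`) with finite domain. -/
def Cond (A : Type*) : Type _ := {p : A → Option Bool // {a | p a ≠ none}.Finite}

/-- The domain of a condition. -/
def Cond.dom {A : Type*} (p : Cond A) : Set A := {a | p.1 a ≠ none}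

/-- `q` extends `p` iff `p ⊆ q` as partial functions (reverse inclusion order). -/
def Cond.Extends {A : Type*} (q p : Cond A) : Prop :=
  ∀ a b, p.1 a = some b → q.1 a = some b

/-- Two conditions are compatible iff they agree on the intersection of their domains
(equivalently, their union is again a partial function). -/
def Cond.Compatible {A : Type*} (p q : Cond A) : Prop :=
  ∀ a x y, p.1 a = some x → q.1 a = some y → x = y

open Classical in
/-- The restriction `p ↾ s` of a condition `p` to a set `s`. -/
noncomputable def Cond.restrict {A : Type*} (p : Cond A) (s : Set A) : Cond A :=
  ⟨fun a => if a ∈ s then p.1 a else none,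
   p.2.subset fun a ha => by
     simp only [Set.mem_setOf_eq] at ha ⊢
     intro h
     apply ha
     split <;> simp [h]⟩

/-- `p` is a minimal element of `N` with respect to restriction: `p ∈ N` and no proper
restriction of `p` belongs to `N`. -/
def Cond.MinimalIn {A : Type*} (N : Set (Cond A)) (p : Cond A) : Prop :=
  p ∈ N ∧ ∀ s : Set A, s ⊂ p.dom → p.restrict s ∉ N

section CondAux

variable {A : Type*}

lemma Cond.not_mem_dom {p : Cond A} {a : A} (h : a ∉ p.dom) : p.1 a = none := by
  by_contra hn; exact h hn

lemma Cond.mem_dom {p : Cond A} {a : A} (h : p.1 a ≠ none) : a ∈ p.dom := h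

/-- The conditions with domain inside a fixed finite set form a finite set. -/
lemma cond_dom_subset_finite (s : Set A) (hs : s.Finite) :
    {p : Cond A | p.dom ⊆ s}.Finite := by
  have : Finite s := hs.to_subtype
  apply Set.Finite.of_finite_image (f := fun p : Cond A => (fun a : s => p.1 a))
  · exact Set.toFinite _
  · intro p hp q hq he
    apply Subtype.ext
    funext a
    by_cases ha : a ∈ s
    · exact congrFun he ⟨a, ha⟩
    · rw [Cond.not_mem_dom (fun h => ha (hp h)), Cond.not_mem_dom (fun h => ha (hq h))]

open Classical in
lemma Cond.restrict_apply (p : Cond A) (s : Set A) (a : A) :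
    (p.restrict s).1 a = if a ∈ s then p.1 a else none := rfl

lemma Cond.restrict_dom_subset (p : Cond A) (s : Set A) : (p.restrict s).dom ⊆ s := by
  intro a ha
  by_contra h
  apply ha
  rw [Cond.restrict_apply, if_neg h]

lemma Cond.restrict_apply_of_mem (p : Cond A) {s : Set A} {a : A} (h : a ∈ s) :
    (p.restrict s).1 a = p.1 a := by
  rw [Cond.restrict_apply, if_pos h]

end CondAux

/-- Let `N ⊆ Add(A,1)` be (i) closed under extension, and such that (ii) whenever every
extension of a condition `p` has a further extension lying in `N`, then `p ∈ N`. Then for every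
natural number `k`, the set of minimal elements of `N` (no proper restriction belongs to `N`)
whose domain has cardinality exactly `k` is finite. -/
theorem minimal_elements_of_fixed_size_finite {A : Type*} (N : Set (Cond A))
    (hup : ∀ p ∈ N, ∀ q : Cond A, q.Extends p → q ∈ N)
    (hdense : ∀ p : Cond A,
      (∀ q : Cond A, q.Extends p → ∃ r : Cond A, r.Extends q ∧ r ∈ N) → p ∈ N)
    (k : ℕ) :
    {p : Cond A | Cond.MinimalIn N p ∧ p.dom.ncard = k}.Finite := by
  classical
  by_contra hinf
  set S := {p : Cond A | Cond.MinimalIn N p ∧ p.dom.ncard = k} with hSdef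
  have hSinf : S.Infinite := hinf
  let domF : Cond A → Finset A := fun p => p.2.toFinset
  have hdomF : ∀ p : Cond A, ↑(domF p) = p.dom := fun p => p.2.coe_toFinset
  have hfib : ∀ d : Finset A, {p : Cond A | p.dom ⊆ ↑d}.Finite := fun d =>
    cond_dom_subset_finite _ d.finite_toSet
  have hcardF : ∀ p ∈ S, (domF p).card = k := by
    intro p hp
    have h1 : (↑(domF p) : Set A).ncard = k := by rw [hdomF]; exact hp.2
    rwa [Set.ncard_coe_finset] at h1
  -- the set of domains is infinite
  have hD : (domF '' S).Infinite := by
    intro hfin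
    apply hSinf
    apply (hfin.biUnion fun d _ => hfib d).subset
    intro p hp
    exact Set.mem_biUnion (Set.mem_image_of_mem domF hp) (show p.dom ⊆ ↑(domF p) by rw [hdomF])
  have hDcard : ∀ d ∈ domF '' S, d.card ≤ k := by
    rintro _ ⟨p, hp, rfl⟩
    exact (hcardF p hp).le
  obtain ⟨R, T, hTD, hTinf, hroot⟩ := DeltaAux.delta_system k (domF '' S) hD hDcard
  set S' := {p ∈ S | domF p ∈ T} with hS'def
  have hS'inf : S'.Infinite := by
    intro hfin
    apply hTinf
    apply (hfin.image domF).subset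
    intro d hd
    obtain ⟨p, hp, rfl⟩ := hTD hd
    exact ⟨p, ⟨hp, hd⟩, rfl⟩
  -- pigeonhole on the restriction to R
  obtain ⟨q₀, hq₀inf⟩ : ∃ q₀ : Cond A, {p ∈ S' | p.restrict ↑R = q₀}.Infinite := by
    by_contra h
    push_neg at h
    apply hS'inf
    refine ((hfib R).biUnion fun q _ => h q).subset ?_
    intro p hp
    exact Set.mem_biUnion (Cond.restrict_dom_subset p ↑R) ⟨hp, rfl⟩
  set S'' := {p ∈ S' | p.restrict ↑R = q₀} with hS''def
  have hmemS : ∀ p ∈ S'', Cond.MinimalIn N p ∧ p.dom.ncard = k := fun p hp => hp.1.1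
  have hmemT : ∀ p ∈ S'', domF p ∈ T := fun p hp => hp.1.2
  -- avoidance: only finitely many members of S'' hit a fixed finite set outside R
  have havoid : ∀ F : Set A, F.Finite → {p ∈ S'' | ¬ (p.dom ∩ F ⊆ ↑R)}.Finite := by
    intro F hF
    have hsub : {p ∈ S'' | ¬ (p.dom ∩ F ⊆ ↑R)} ⊆
        ⋃ a ∈ F, {p ∈ S'' | a ∈ p.dom ∧ a ∉ (↑R : Set A)} := by
      rintro p ⟨hp, hnp⟩
      rw [Set.not_subset] at hnp
      obtain ⟨a, ⟨had, haF⟩, haR⟩ := hnp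
      exact Set.mem_biUnion haF ⟨hp, had, haR⟩
    refine (hF.biUnion ?_).subset hsub
    intro a _
    rcases Set.eq_empty_or_nonempty {p ∈ S'' | a ∈ p.dom ∧ a ∉ (↑R : Set A)} with he | ⟨p₀, hp₀⟩
    · rw [he]; exact Set.finite_empty
    · apply (hfib (domF p₀)).subset
      rintro p ⟨hp, had, haR⟩
      have hdeq : domF p = domF p₀ := by
        by_contra hne
        apply haR
        have h1 : a ∈ domF p := p.2.mem_toFinset.mpr had
        have h2 : a ∈ domF p₀ := p₀.2.mem_toFinset.mpr hp₀.2.1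
        have := hroot (domF p) (hmemT p hp) (domF p₀) (hmemT p₀ hp₀.1) hne
        rw [← this] at *
        exact Finset.mem_coe.2 (Finset.mem_inter.2 ⟨h1, h2⟩)
      show p.dom ⊆ ↑(domF p₀)
      rw [← hdeq, hdomF]
  -- pick two members with distinct domains
  obtain ⟨p₁, hp₁⟩ := hq₀inf.nonempty
  obtain ⟨p₂, hp₂S, hp₂ne⟩ : ∃ p₂ ∈ S'', domF p₂ ≠ domF p₁ := by
    by_contra h
    push_neg at h
    apply hq₀inf
    apply (hfib (domF p₁)).subset
    intro p hp
    show p.dom ⊆ ↑(domF p₁)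
    rw [← h p hp, hdomF]
  have hRdom : R ⊆ domF p₁ := by
    rw [← hroot (domF p₁) (hmemT p₁ hp₁) (domF p₂) (hmemT p₂ hp₂S) (Ne.symm hp₂ne)]
    exact Finset.inter_subset_left
  have hRne : (↑R : Set A) ≠ p₁.dom := by
    intro he
    have hR1 : R = domF p₁ := Finset.coe_injective (by rw [he, hdomF])
    have hR2 : R ⊆ domF p₂ := by
      rw [← hroot (domF p₂) (hmemT p₂ hp₂S) (domF p₁) (hmemT p₁ hp₁) hp₂ne]
      exact Finset.inter_subset_left
    have hcard2 : (domF p₂).card ≤ R.card := by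
      rw [hR1, hcardF p₁ hp₁.1.1, hcardF p₂ hp₂S.1.1]
    exact hp₂ne (((Finset.eq_of_subset_of_card_le hR2 hcard2).symm.trans hR1))
  -- q₀ belongs to N
  have hq₀N : q₀ ∈ N := by
    apply hdense
    intro s hs
    obtain ⟨p, hpS, hpavoid⟩ : ∃ p ∈ S'', p.dom ∩ s.dom ⊆ ↑R := by
      obtain ⟨p, hp1, hp2⟩ := (hq₀inf.diff (havoid s.dom s.2)).nonempty
      refine ⟨p, hp1, ?_⟩
      by_contra h
      exact hp2 ⟨hp1, h⟩
    have hpN : p ∈ N := (hmemS p hpS).1.1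
    refine ⟨⟨fun a => match s.1 a with | some b => some b | none => p.1 a, ?_⟩, ?_, ?_⟩
    · apply (s.2.union p.2).subset
      intro a ha
      simp only [Set.mem_setOf_eq] at ha ⊢
      by_contra hn
      apply ha
      rw [Set.mem_union] at hn
      push_neg at hn
      have h1 : s.1 a = none := by by_contra h; exact hn.1 h
      have h2 : p.1 a = none := by by_contra h; exact hn.2 h
      show (match s.1 a with | some b => some b | none => p.1 a) = none
      rw [h1, h2]
    · intro a b hb
      show (match s.1 a with | some b => some b | none => p.1 a) = some b
      rw [hb]
    · apply hup p hpN
      intro a b hb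
      show (match s.1 a with | some c => some c | none => p.1 a) = some b
      cases hsa : s.1 a with
      | none => exact hb
      | some c =>
        have haR : a ∈ (↑R : Set A) := hpavoid ⟨Cond.mem_dom (by rw [hb]; simp),
          Cond.mem_dom (by rw [hsa]; simp)⟩
        have hq : q₀.1 a = some b := by
          rw [← hpS.2, Cond.restrict_apply_of_mem p haR, hb]
        rw [hs a b hq] at hsa
        rw [hsa]
  -- contradiction with minimality of p₁
  have hsubset : (↑R : Set A) ⊆ p₁.dom := by
    rw [← hdomF p₁]
    exact Finset.coe_subset.2 hRdom
  exact ((hmemS p₁ hp₁).1.2 ↑R ⟨hsubset, fun h => hRne (Set.Subset.antisymm hsubset h)⟩)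
    (hp₁.2 ▸ hq₀N)
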